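/- Let ξ ∈ ℂ with ξ ≠ 1 and such that 1 + ξ is not a nonpositive integer, and let z ∈ ℂ with z ≠ 0. Then ₂F₂[1, 1/2 + ξ/2; 2 + ξ, 2; z] = (2/z) · ((ξ + 1)/(ξ − 1)) · ( ₁F₁[−1/2 + ξ/2; 1 + ξ; z] − 1 ). -/

import Mathlib

/-- The Pochhammer symbol (rising factorial): `(z)₀ = 1`, `(z)_{n+1} = (z)_n · (z + n)`. -/
noncomputable def poch (z : ℂ) : ℕ → ℂ
  | 0 => 1
  | n + 1 => poch z n * (z + (n : ℂ))

/-- The generalized hypergeometric series `₂F₂[a₁,a₂; b₁,b₂; z]`. -/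
noncomputable def F22 (a₁ a₂ b₁ b₂ z : ℂ) : ℂ :=
  ∑' n : ℕ, poch a₁ n * poch a₂ n / (poch b₁ n * poch b₂ n) * z ^ n / (Nat.factorial n : ℂ)

/-- The confluent hypergeometric (Kummer) series `₁F₁[a; b; z]`. -/
noncomputable def F11 (a b z : ℂ) : ℂ :=
  ∑' n : ℕ, poch a n / poch b n * z ^ n / (Nat.factorial n : ℂ)

lemma poch_one (n : ℕ) : poch 1 n = (Nat.factorial n : ℂ) := by
  induction n with
  | zero => simp [poch]
  | succ n ih => simp [poch, ih, Nat.factorial_succ]; ring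

lemma poch_two (n : ℕ) : poch 2 n = (Nat.factorial (n+1) : ℂ) := by
  induction n with
  | zero => simp [poch]
  | succ n ih => simp [poch, ih, Nat.factorial_succ]; push_cast; ring

lemma poch_succ' (a : ℂ) (n : ℕ) : poch a (n+1) = a * poch (a+1) n := by
  induction n with
  | zero => simp [poch]
  | succ n ih => rw [show n+1+1 = (n+1)+1 from rfl, poch, ih, poch]; push_cast; ring

lemma poch_ne_zero (b : ℂ) (hb : ∀ k : ℕ, b + (k:ℂ) ≠ 0) (n : ℕ) : poch b n ≠ 0 := by
  induction n with
  | zero => simp [poch]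
  | succ n ih => exact mul_ne_zero ih (hb n)

lemma kummer_summable (a b z : ℂ) (hbn : ∀ n : ℕ, poch b n ≠ 0) :
    Summable (fun n : ℕ => poch a n / poch b n * z ^ n / (Nat.factorial n : ℂ)) := by
  set f : ℕ → ℂ := fun n => poch a n / poch b n * z ^ n / (Nat.factorial n : ℂ) with hf
  by_cases hz0 : z = 0
  · apply summable_of_ne_finset_zero (s := Finset.range 1)
    intro n hn
    have : 1 ≤ n := Nat.one_le_iff_ne_zero.mpr (by simpa using hn)
    have : z ^ n = 0 := by
      rw [hz0]; exact zero_pow (by omega)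
    simp [hf, this]
  by_cases ha : ∃ k : ℕ, a + (k:ℂ) = 0
  · obtain ⟨k, hk⟩ := ha
    apply summable_of_ne_finset_zero (s := Finset.range (k+1))
    intro n hn
    have hkn : k + 1 ≤ n := by simpa using hn
    have hpz : poch a n = 0 := by
      clear hn
      induction n with
      | zero => omega
      | succ m ih =>
        rcases Nat.lt_or_ge m (k+1) with h | h
        · have : m = k := by omega
          subst this
          simp [poch, hk]
        · simp [poch, ih h]
    simp [hf, hpz]
  · push_neg at ha
    have hfn : ∀ n, f n ≠ 0 := fun n =>
      div_ne_zero (mul_ne_zero (div_ne_zero (poch_ne_zero a ha n) (hbn n))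
        (pow_ne_zero n hz0)) (Nat.cast_ne_zero.2 (Nat.factorial_ne_zero n))
    -- ratio test
    have key : ∀ n : ℕ, f (n+1) = f n * ((a + n) * z / ((b + n) * (n+1))) := by
      intro n
      simp only [hf, poch, pow_succ, Nat.factorial_succ]
      push_cast
      field_simp
    have hbne : ∀ n : ℕ, b + (n:ℂ) ≠ 0 := by
      intro n h
      exact hbn (n+1) (by simp [poch, h])
    -- the complex ratio tends to 0
    have hratio : Filter.Tendsto (fun n : ℕ => ‖(a + n) * z / ((b + n) * ((n:ℂ)+1))‖)
        Filter.atTop (nhds 0) := by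
      have h1 : Filter.Tendsto (fun n : ℕ => ((a:ℂ) + n) / (b + n)) Filter.atTop (nhds 1) := by
        have heq : ∀ n : ℕ, ((a:ℂ) + n) / (b + n) = 1 + (a - b) / (b + n) := by
          intro n
          field_simp [hbne n]
          ring
        have hnorm : Filter.Tendsto (fun n : ℕ => ‖(b:ℂ) + n‖) Filter.atTop Filter.atTop := by
          apply Filter.tendsto_atTop_mono (fun n : ℕ => ?_)
            (Filter.tendsto_atTop_add_const_right _ (-‖b‖) tendsto_natCast_atTop_atTop)
          have h3 := norm_add_le ((b:ℂ) + n) (-b)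
          have h4 : ((b:ℂ) + n) + (-b) = (n:ℂ) := by ring
          rw [h4, norm_neg] at h3
          have h5 : ‖(n:ℂ)‖ = (n:ℝ) := by simp
          rw [h5] at h3
          linarith
        have h0 : Filter.Tendsto (fun n : ℕ => (a - b) / ((b:ℂ) + n)) Filter.atTop (nhds 0) := by
          rw [tendsto_zero_iff_norm_tendsto_zero]
          simp only [norm_div]
          exact Filter.Tendsto.div_atTop tendsto_const_nhds hnorm
        have := Filter.Tendsto.const_add (1:ℂ) h0
        simpa [heq] using this
      have h2 : Filter.Tendsto (fun n : ℕ => ‖((a:ℂ) + n) / (b + n)‖ * ‖z‖ / ((n:ℝ)+1))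
          Filter.atTop (nhds 0) :=
        Filter.Tendsto.div_atTop ((h1.norm).mul_const _)
          (Filter.tendsto_atTop_add_const_right _ 1 tendsto_natCast_atTop_atTop)
      refine h2.congr (fun n => ?_)
      have hn1 : ‖((n:ℂ)+1)‖ = (n:ℝ)+1 := by
        rw [show ((n:ℂ)+1) = ((n+1 : ℕ):ℂ) by push_cast; ring]
        rw [Complex.norm_natCast]
        push_cast
        ring
      have hb0 : ‖(b:ℂ)+n‖ ≠ 0 := norm_ne_zero_iff.2 (hbne n)
      have hb0' : ‖(n:ℂ)+b‖ ≠ 0 := by rwa [add_comm]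
      have hn0 : (n:ℝ)+1 ≠ 0 := by positivity
      simp only [norm_div, norm_mul, hn1]
      field_simp
    apply summable_of_ratio_test_tendsto_lt_one (l := 0) one_pos
      (Filter.Eventually.of_forall hfn)
    refine hratio.congr (fun n => ?_)
    rw [key n, norm_mul]
    exact (mul_div_cancel_left₀ _ (norm_ne_zero_iff.2 (hfn n))).symm

lemma aux_scalar (ξ z P Q Fc Fn w : ℂ) (hz : z ≠ 0) (h1 : ξ - 1 ≠ 0) (h2 : (1:ℂ)+ξ ≠ 0)
    (hQ : Q ≠ 0) (hFc : Fc ≠ 0) (hFn : Fn ≠ 0) :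
    Fn * P / (Q * Fc) * w / Fn
      = (2/z)*((ξ+1)/(ξ-1)) * ((-1/2+ξ/2) * P / ((1+ξ)*Q) * (w*z) / Fc) := by
  have hL : Fn * P / (Q * Fc) * w / Fn = (Fn * P * w) / (Q * Fc * Fn) := by ring
  have hK : (2/z)*((ξ+1)/(ξ-1)) * ((-1/2+ξ/2) / (1+ξ)) = 1/z := by
    field_simp
    ring
  have hsplit : (-1/2+ξ/2) * P / ((1+ξ)*Q) * (w*z) / Fc
      = ((-1/2+ξ/2)/(1+ξ)) * (P * (w*z) / (Q * Fc)) := by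
    field_simp
  rw [hsplit, show (2/z)*((ξ+1)/(ξ-1)) * (((-1/2+ξ/2)/(1+ξ)) * (P*(w*z)/(Q*Fc)))
      = ((2/z)*((ξ+1)/(ξ-1)) * ((-1/2+ξ/2)/(1+ξ))) * (P*(w*z)/(Q*Fc)) from by ring, hK]
  rw [hL, show (1/z) * (P*(w*z)/(Q*Fc)) = (P*(w*z))/(z*(Q*Fc)) from by ring,
    div_eq_div_iff (mul_ne_zero (mul_ne_zero hQ hFc) hFn)
      (mul_ne_zero hz (mul_ne_zero hQ hFc))]
  ring

/-- `₂F₂[1, 1/2+ξ/2; 2+ξ, 2; z] = (2/z)·((ξ+1)/(ξ−1))·(₁F₁[−1/2+ξ/2; 1+ξ; z] − 1)`, for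
`ξ ≠ 1` with `1 + ξ` not a nonpositive integer, and `z ≠ 0`. -/
theorem two_F_two_reduces_to_Kummer
    (ξ z : ℂ) (hξ : ξ ≠ 1) (hb : ∀ k : ℕ, 1 + ξ ≠ -(k : ℂ)) (hz : z ≠ 0) :
    F22 1 (1/2 + ξ/2) (2 + ξ) 2 z =
      (2 / z) * ((ξ + 1) / (ξ - 1)) * (F11 (-1/2 + ξ/2) (1 + ξ) z - 1) := by
  have hξ1 : ξ - 1 ≠ 0 := sub_ne_zero.2 hξ
  have hbne : ∀ n : ℕ, (1+ξ) + (n:ℂ) ≠ 0 := by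
    intro n h
    exact hb n (by linear_combination h)
  have hξp1 : ξ + 1 ≠ 0 := by
    have := hbne 0
    simpa [add_comm] using this
  have hbn : ∀ n, poch (1+ξ) n ≠ 0 := poch_ne_zero _ hbne
  have hbn2 : ∀ n, poch (2+ξ) n ≠ 0 := by
    apply poch_ne_zero
    intro k h
    apply hbne (k+1)
    push_cast
    linear_combination h
  set f : ℕ → ℂ := fun n => poch (-1/2 + ξ/2) n / poch (1+ξ) n * z ^ n / (Nat.factorial n : ℂ)
    with hfdef
  have hsum : Summable f := kummer_summable _ _ z hbn
  have hterm : ∀ n : ℕ,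
      poch 1 n * poch (1/2 + ξ/2) n / (poch (2+ξ) n * poch 2 n) * z ^ n / (Nat.factorial n : ℂ)
      = (2 / z) * ((ξ + 1) / (ξ - 1)) * f (n+1) := by
    intro n
    have e1 : (-1/2 + ξ/2 : ℂ) + 1 = 1/2 + ξ/2 := by ring
    have e2 : ((1:ℂ)+ξ) + 1 = 2 + ξ := by ring
    simp only [hfdef]
    rw [poch_succ', poch_succ', e1, e2, poch_one, poch_two, pow_succ]
    have h1 : (1+ξ : ℂ) ≠ 0 := by simpa using hbne 0
    exact aux_scalar ξ z _ _ _ _ _ hz hξ1 h1 (hbn2 n)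
      (Nat.cast_ne_zero.2 (Nat.factorial_ne_zero _)) (Nat.cast_ne_zero.2 (Nat.factorial_ne_zero n))
  have hzero : f 0 = 1 := by simp [hfdef, poch]
  calc F22 1 (1/2 + ξ/2) (2 + ξ) 2 z
      = ∑' n : ℕ, (2 / z) * ((ξ + 1) / (ξ - 1)) * f (n+1) := tsum_congr hterm
    _ = (2 / z) * ((ξ + 1) / (ξ - 1)) * ∑' n : ℕ, f (n+1) := tsum_mul_left
    _ = (2 / z) * ((ξ + 1) / (ξ - 1)) * (F11 (-1/2 + ξ/2) (1 + ξ) z - 1) := by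
        have := Summable.tsum_eq_zero_add hsum
        rw [hzero] at this
        have h3 : ∑' n : ℕ, f (n+1) = (∑' n, f n) - 1 := by
          rw [this]; ring
        rw [h3]
        rfl
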